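/- Let σ ∈ 𝒞_q be a q-cycle with des(σ) = d ≥ 2 and signature sig(σ) = (a₁,…,a_q). Then σ has a realization under the multiplication map m_d (i.e., a period q orbit 𝒪 = {x₁,…,x_q} of m_d with m_d(x_i) = x_{σ(i)} for all i) if and only if a_q = 1; moreover, when a_q = 1 this realization is unique. -/

import Mathlib

open scoped Classical

noncomputable section

/-- The representative of `i : ZMod q` in `{1, …, q}`. -/
def rep (q : ℕ) [NeZero q] (i : ZMod q) : ℕ :=
  if i = 0 then q else i.val

/-- The rotation `ρ : i ↦ i + 1 (mod q)` of `ZMod q`. -/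
def rotPerm (q : ℕ) : Equiv.Perm (ZMod q) :=
  Equiv.addRight 1

/-- The descent number `des σ`: the number of `i ∈ ZMod q` with `σ(i) > σ(i+1)`,
values compared via their representatives in `{1, …, q}`. -/
def desNum (q : ℕ) [NeZero q] (σ : Equiv.Perm (ZMod q)) : ℕ :=
  (Finset.univ.filter fun i : ZMod q => rep q (σ (i + 1)) < rep q (σ i)).card

/-- `σ` is a `q`-cycle, i.e. it acts transitively on `ZMod q`. -/
def IsQCycle (q : ℕ) (σ : Equiv.Perm (ZMod q)) : Prop :=
  ∀ i j : ZMod q, ∃ n : ℕ, (σ ^ n) i = j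

/-- The transition matrix of `σ`: the `(i,j)` entry is `1` if `j` lies in the
cyclic interval `[σ(i), σ(i+1))` of `ZMod q` and `0` otherwise. -/
def transMatrix (q : ℕ) [NeZero q] (σ : Equiv.Perm (ZMod q)) :
    Matrix (ZMod q) (ZMod q) ℝ :=
  Matrix.of fun i j => if (j - σ i).val < (σ (i + 1) - σ i).val then (1 : ℝ) else 0

/-- A probability vector: non-negative components summing to `1`. -/
def IsProbVec (q : ℕ) [NeZero q] (v : ZMod q → ℝ) : Prop :=
  (∀ i, 0 ≤ v i) ∧ ∑ i, v i = 1

/-- The symmetry order of `σ`: the order of the stabilizer of `σ` in the rotation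
group `⟨ρ⟩` acting by conjugation. -/
def symOrder (q : ℕ) [NeZero q] (σ : Equiv.Perm (ZMod q)) : ℕ :=
  ((Finset.range q).filter fun j => rotPerm q ^ j * σ * (rotPerm q ^ j)⁻¹ = σ).card

/-- `F : ℝ → ℝ` is a lift of a degree `k` covering map of `ℝ/ℤ`:
a homeomorphism of `ℝ` with `F (t+1) = F t + k`. -/
def IsDegreeLift (k : ℕ) (F : ℝ → ℝ) : Prop :=
  Continuous F ∧ StrictMono F ∧ ∀ t, F (t + 1) = F t + k

/-- The fixed point of the circle map corresponding to `u` (a point with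
`F u - u ∈ ℤ`) is topologically repelling: `t ↦ F t - t` is strictly increasing
in a neighborhood of `u`. -/
def TopRepelling (F : ℝ → ℝ) (u : ℝ) : Prop :=
  ∃ ε > 0, StrictMonoOn (fun t => F t - t) (Set.Ioo (u - ε) (u + ε))

/-- `x : ZMod q → ℝ` is a period `q` orbit realizing `σ` for the circle map with
lift `F`: the points `x i` lie in `(0,1)` and are increasing with respect to the
representatives `{1, …, q}` (so that `0, x₁, …, x_q` are in positive cyclic
order), and on the circle `f(x i) = x (σ i)` for all `i`. -/
def IsRealization (q : ℕ) [NeZero q] (σ : Equiv.Perm (ZMod q))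
    (F : ℝ → ℝ) (x : ZMod q → ℝ) : Prop :=
  (∀ i, x i ∈ Set.Ioo (0 : ℝ) 1) ∧
  (∀ i j : ZMod q, rep q i < rep q j → x i < x j) ∧
  (∀ i, ∃ m : ℤ, F (x i) = x (σ i) + m)

/-- A realization of `σ` under the multiplication map `m_k : x ↦ kx (mod ℤ)`. -/
def MkRealization (q k : ℕ) [NeZero q] (σ : Equiv.Perm (ZMod q)) (x : ZMod q → ℝ) : Prop :=
  IsRealization q σ (fun t => (k : ℝ) * t) x

/-- The upper endpoint (as a real number) of the partition interval
`I i = [x i, x (i+1)]`; for `i = 0 ≡ q` the interval wraps around `0 ∈ ℝ/ℤ`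
and the endpoint is `x 1 + 1`. -/
def upperPt (q : ℕ) [NeZero q] (x : ZMod q → ℝ) (i : ZMod q) : ℝ :=
  if i = 0 then x 1 + 1 else x (i + 1)

/-- The `i`-th component of the fixed point distribution: the number of fixed
points of `m_k` (the points `j/(k-1) (mod ℤ)`) in the interior of the partition
interval `I i`. -/
def fixDist (q k : ℕ) [NeZero q] (x : ZMod q → ℝ) (i : ZMod q) : ℕ :=
  ((Finset.Icc 1 (2 * (k - 1))).filter fun j : ℕ =>
    x i < (j : ℝ) / ((k : ℝ) - 1) ∧ (j : ℝ) / ((k : ℝ) - 1) < upperPt q x i).card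

/-- The number of fixed points of `m_k` in the interval `(0, x 1)`. -/
def countFixBelow (q k : ℕ) [NeZero q] (x : ZMod q → ℝ) : ℕ :=
  ((Finset.range (k - 1)).filter fun j : ℕ =>
    0 < j ∧ (j : ℝ) / ((k : ℝ) - 1) < x 1).card

/-- The `m`-th component of the (cumulative) deployment vector: the number of
orbit points in `(0, m/(k-1))`. -/
def depCount (q k : ℕ) [NeZero q] (x : ZMod q → ℝ) (m : ℕ) : ℕ :=
  (Finset.univ.filter fun j : ZMod q => x j < (m : ℝ) / ((k : ℝ) - 1)).card

/-- The rank of a marked index `i` among the marked indices `i₁ < ⋯ < i_{d-1}`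
(ordered by their representatives in `{1, …, q}`). -/
def markRank (q : ℕ) [NeZero q] (σ : Equiv.Perm (ZMod q)) (i : ZMod q) : ℕ :=
  (Finset.univ.filter fun i' : ZMod q =>
    transMatrix q σ i' i' = 1 ∧ rep q i' ≤ rep q i).card

namespace MR
variable {q : ℕ} [NeZero q]

lemma q_pos : 0 < q := Nat.pos_of_ne_zero (NeZero.ne q)

lemma rep_le (i : ZMod q) : rep q i ≤ q := by
  unfold rep; split
  · exact le_rfl
  · exact (ZMod.val_lt i).le

lemma rep_pos (i : ZMod q) : 1 ≤ rep q i := by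
  unfold rep; split
  · exact q_pos
  · next h => exact Nat.pos_of_ne_zero fun h0 => h ((ZMod.val_eq_zero i).1 h0)

lemma cast_rep (i : ZMod q) : ((rep q i : ℕ) : ZMod q) = i := by
  unfold rep; split
  · next h => simp [h]
  · rw [ZMod.natCast_val, ZMod.cast_id]

lemma rep_inj {i j : ZMod q} (h : rep q i = rep q j) : i = j := by
  have h2 := congrArg (fun r : ℕ => (r : ZMod q)) h
  simpa [cast_rep] using h2

lemma rep_cast {r : ℕ} (h1 : 1 ≤ r) (h2 : r ≤ q) : rep q (r : ZMod q) = r := by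
  rcases eq_or_lt_of_le h2 with rfl | h2
  · simp [rep]
  · have hne : ((r : ZMod q)) ≠ 0 := by
      intro h0
      have := (ZMod.val_eq_zero (r : ZMod q)).2 h0
      rw [ZMod.val_natCast_of_lt h2] at this; omega
    simp [rep, hne, ZMod.val_natCast_of_lt h2]

variable {σ : Equiv.Perm (ZMod q)}

lemma pow_q_eq_one (hq : 2 ≤ q) (hσ : IsQCycle q σ) : σ ^ q = 1 := by
  haveI : Fact (1 < q) := ⟨hq⟩
  have h01 : (0 : ZMod q) ≠ 1 := zero_ne_one
  have hmoved : ∀ y : ZMod q, σ y ≠ y := by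
    intro y hy
    have hfix : ∀ n : ℕ, (σ ^ n) y = y := by
      intro n; induction n with
      | zero => rfl
      | succ n ih => rw [pow_succ', Equiv.Perm.mul_apply, ih, hy]
    have h0 := hσ y 0
    have h1 := hσ y 1
    obtain ⟨n0, h0⟩ := h0; obtain ⟨n1, h1⟩ := h1
    rw [hfix] at h0 h1
    exact h01 (h0.symm.trans h1)
  have hcyc : σ.IsCycle := by
    refine ⟨0, hmoved 0, fun y _ => ?_⟩
    obtain ⟨n, hn⟩ := hσ 0 y
    exact ⟨(n : ℤ), by simpa [zpow_natCast] using hn⟩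
  have hsupp : σ.support = Finset.univ := by
    ext y; simp [Equiv.Perm.mem_support, hmoved y]
  have : orderOf σ = q := by
    rw [hcyc.orderOf, hsupp, Finset.card_univ, ZMod.card]
  exact orderOf_dvd_iff_pow_eq_one.mp (by rw [this])

lemma exists_pow_lt (hq : 2 ≤ q) (hσ : IsQCycle q σ) (i j : ZMod q) :
    ∃ t < q, (σ ^ t) i = j := by
  obtain ⟨n, hn⟩ := hσ i j
  refine ⟨n % q, Nat.mod_lt _ q_pos, ?_⟩
  rw [← hn]
  conv_rhs => rw [← Nat.div_add_mod n q]
  rw [pow_add, pow_mul, pow_q_eq_one hq hσ, one_pow, one_mul]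

end MR
namespace MR
variable {q : ℕ} [NeZero q] {σ : Equiv.Perm (ZMod q)}

/-- Descent at position `i`. -/
def Desc (q : ℕ) [NeZero q] (σ : Equiv.Perm (ZMod q)) (i : ZMod q) : Prop :=
  rep q (σ (i + 1)) < rep q (σ i)

lemma desNum_eq : desNum q σ = (Finset.univ.filter fun i : ZMod q => Desc q σ i).card := by
  unfold desNum
  congr 1
  apply Finset.filter_congr
  intro x _
  simp [Desc]

/-- descents among positions `r ∈ [1,q]` count all descents -/
lemma card_Icc_desc :
    ((Finset.Icc 1 q).filter fun r : ℕ => Desc q σ (r : ZMod q)).card = desNum q σ := by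
  rw [desNum_eq]
  apply Finset.card_bij (fun (r : ℕ) _ => (r : ZMod q))
  · intro r hr
    simp only [Finset.mem_filter, Finset.mem_Icc] at hr
    simp [hr.2, Finset.mem_filter]
  · intro r hr r' hr' h
    simp only [Finset.mem_filter, Finset.mem_Icc] at hr hr'
    have := congrArg (rep q) h
    rwa [rep_cast hr.1.1 hr.1.2, rep_cast hr'.1.1 hr'.1.2] at this
  · intro j hj
    simp only [Finset.mem_filter, Finset.mem_univ, true_and] at hj
    refine ⟨rep q j, ?_, cast_rep j⟩
    simp only [Finset.mem_filter, Finset.mem_Icc]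
    exact ⟨⟨rep_pos j, rep_le j⟩, by rw [cast_rep j]; exact hj⟩

lemma card_Ico_desc (hq : 1 ≤ q) :
    ((Finset.Ico 1 q).filter fun r : ℕ => Desc q σ (r : ZMod q)).card
      + (if Desc q σ 0 then 1 else 0) = desNum q σ := by
  rw [← card_Icc_desc, ← Finset.Ico_insert_right hq, Finset.filter_insert]
  have hq0 : ((q : ℕ) : ZMod q) = 0 := ZMod.natCast_self q
  have hnotmem : q ∉ Finset.Ico 1 q := by simp
  rw [hq0]
  by_cases h : Desc q σ 0
  · rw [if_pos h, if_pos h,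
      Finset.card_insert_of_notMem (fun hmem => hnotmem (Finset.mem_of_mem_filter _ hmem))]
  · rw [if_neg h, if_neg h, add_zero]

/-- `mval i` : number of descents at positions with representative `< rep i`. -/
def mval (q : ℕ) [NeZero q] (σ : Equiv.Perm (ZMod q)) (i : ZMod q) : ℕ :=
  ((Finset.Ico 1 (rep q i)).filter fun r : ℕ => Desc q σ (r : ZMod q)).card

lemma mval_mono {i j : ZMod q} (h : rep q i ≤ rep q j) : mval q σ i ≤ mval q σ j :=
  Finset.card_le_card (Finset.filter_subset_filter _ (Finset.Ico_subset_Ico le_rfl h))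

lemma rep_one (hq : 2 ≤ q) : rep q (1 : ZMod q) = 1 := by
  have := rep_cast (q := q) (r := 1) le_rfl (by omega)
  simpa using this

lemma rep_zero : rep q (0 : ZMod q) = q := by simp [rep]

lemma mval_one (hq : 2 ≤ q) : mval q σ (1 : ZMod q) = 0 := by
  simp [mval, rep_one hq]

lemma mval_zero (hq : 2 ≤ q) (h0 : Desc q σ 0) :
    mval q σ (0 : ZMod q) + 1 = desNum q σ := by
  have := card_Ico_desc (σ := σ) (by omega)
  rw [if_pos h0] at this
  simpa [mval, rep_zero] using this

lemma mval_le (hq : 2 ≤ q) (h0 : Desc q σ 0) (i : ZMod q) :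
    mval q σ i + 1 ≤ desNum q σ := by
  have h1 := mval_mono (σ := σ) (i := i) (j := 0) (by rw [rep_zero]; exact rep_le i)
  have h2 := mval_zero hq h0
  omega

lemma mval_succ {r : ℕ} (h1 : 1 ≤ r) (h2 : r < q) :
    mval q σ ((r + 1 : ℕ) : ZMod q)
      = mval q σ ((r : ℕ) : ZMod q) + (if Desc q σ ((r : ℕ) : ZMod q) then 1 else 0) := by
  unfold mval
  rw [rep_cast h1 h2.le, rep_cast (by omega : 1 ≤ r + 1) h2]
  rw [Finset.Ico_add_one_right_eq_Icc, ← Finset.Ico_insert_right h1, Finset.filter_insert]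
  have hnotmem : r ∉ Finset.Ico 1 r := by simp
  split
  · next h =>
    rw [Finset.card_insert_of_notMem (fun hmem => hnotmem (Finset.mem_of_mem_filter _ hmem))]
  · simp

end MR
namespace MR
variable {q : ℕ} [NeZero q] {σ : Equiv.Perm (ZMod q)}

lemma cast_inj_rep {r s : ℕ} (h1 : 1 ≤ r) (h2 : r ≤ q) (h3 : 1 ≤ s) (h4 : s ≤ q)
    (h : ((r : ℕ) : ZMod q) = s) : r = s := by
  have := congrArg (rep q) h
  rwa [rep_cast h1 h2, rep_cast h3 h4] at this

/-- if there is no descent at position `t ∈ [1, q-1]`, the image reps increase -/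
lemma no_desc_step {t : ℕ} (h1 : 1 ≤ t) (h2 : t < q) (h : ¬ Desc q σ ((t : ℕ) : ZMod q)) :
    rep q (σ ((t : ℕ) : ZMod q)) < rep q (σ ((t + 1 : ℕ) : ZMod q)) := by
  unfold Desc at h
  push_neg at h
  have hcast : ((t : ZMod q) + 1) = ((t + 1 : ℕ) : ZMod q) := by push_cast; ring
  rw [hcast] at h
  rcases lt_or_eq_of_le h with h' | h'
  · exact h'
  · exfalso
    have := rep_inj h'
    have := σ.injective this
    have := cast_inj_rep h1 h2.le (by omega) h2 this
    omega

/-- Key step: equal `mval` and increasing reps propagate under `σ`. -/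
lemma step_lemma {i j : ZMod q} (hij : rep q i < rep q j) (hm : mval q σ i = mval q σ j) :
    rep q (σ i) < rep q (σ j) := by
  set r := rep q i with hr
  set s := rep q j with hs
  have hi : ((r : ℕ) : ZMod q) = i := cast_rep i
  have hj : ((s : ℕ) : ZMod q) = j := cast_rep j
  have hr1 : 1 ≤ r := rep_pos i
  have hsq : s ≤ q := rep_le j
  -- no descents in [r, s)
  have hsub : Finset.Ico 1 r ⊆ Finset.Ico 1 s := Finset.Ico_subset_Ico le_rfl hij.le
  have hfe : ((Finset.Ico 1 r).filter fun t : ℕ => Desc q σ (t : ZMod q))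
      = ((Finset.Ico 1 s).filter fun t : ℕ => Desc q σ (t : ZMod q)) := by
    apply Finset.eq_of_subset_of_card_le (Finset.filter_subset_filter _ hsub)
    unfold mval at hm
    rw [← hr, ← hs] at hm
    omega
  have hnod : ∀ t : ℕ, r ≤ t → t < s → ¬ Desc q σ ((t : ℕ) : ZMod q) := by
    intro t ht1 ht2 hD
    have htmem : t ∈ (Finset.Ico 1 s).filter fun t : ℕ => Desc q σ (t : ZMod q) := by
      simp only [Finset.mem_filter, Finset.mem_Ico]
      exact ⟨⟨by omega, ht2⟩, hD⟩
    rw [← hfe] at htmem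
    simp only [Finset.mem_filter, Finset.mem_Ico] at htmem
    omega
  -- chain from r to s
  have hchain : ∀ u : ℕ, r + u ≤ s →
      rep q (σ ((r : ℕ) : ZMod q)) ≤ rep q (σ ((r + u : ℕ) : ZMod q)) := by
    intro u
    induction u with
    | zero => intro _; exact le_rfl
    | succ u ih =>
      intro hu
      have h1 := ih (by omega)
      have h2 := no_desc_step (by omega) (by omega : r + u < q)
        (hnod (r + u) (by omega) (by omega))
      have h3 : rep q (σ ((r + u + 1 : ℕ) : ZMod q))
          = rep q (σ ((r + (u + 1) : ℕ) : ZMod q)) := by ring_nf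
      omega
  have hru : r + (s - r - 1) + 1 = s := by omega
  have hlast := no_desc_step (t := r + (s - r - 1)) (by omega) (by omega)
    (hnod _ (by omega) (by omega))
  have hfirst := hchain (s - r - 1) (by omega)
  rw [hru] at hlast
  calc rep q (σ i) = rep q (σ ((r : ℕ) : ZMod q)) := by rw [hi]
    _ ≤ rep q (σ ((r + (s - r - 1) : ℕ) : ZMod q)) := hfirst
    _ < rep q (σ ((s : ℕ) : ZMod q)) := hlast
    _ = rep q (σ j) := by rw [hj]

end MR
namespace MR
variable {q : ℕ} [NeZero q] {σ : Equiv.Perm (ZMod q)}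

lemma geo_sum (d : ℕ) (n : ℕ) : ∑ t ∈ Finset.range n, (d - 1) * d ^ t + 1 = d ^ n ∨ d = 0 := by
  rcases Nat.eq_zero_or_pos d with h | h
  · right; exact h
  · left
    induction n with
    | zero => simp
    | succ n ih =>
      rw [Finset.sum_range_succ]
      have h2 : (d - 1) * d ^ n + d ^ n = d * d ^ n := by
        have h3 : d - 1 + 1 = d := by omega
        calc (d - 1) * d ^ n + d ^ n = (d - 1 + 1) * d ^ n := by ring
          _ = d * d ^ n := by rw [h3]
      have h4 : d ^ (n + 1) = d * d ^ n := by rw [pow_succ]; ring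
      omega

lemma geo_sum' {d : ℕ} (hd : 1 ≤ d) (n : ℕ) :
    ∑ t ∈ Finset.range n, (d - 1) * d ^ t + 1 = d ^ n := by
  rcases geo_sum d n with h | h
  · exact h
  · omega

lemma geo_sum_rev {d : ℕ} (hd : 1 ≤ d) (n : ℕ) :
    ∑ t ∈ Finset.range n, (d - 1) * d ^ (n - 1 - t) + 1 = d ^ n := by
  rw [Finset.sum_range_reflect (fun t => (d - 1) * d ^ t) n]
  exact geo_sum' hd n

lemma tail_lt {d : ℕ} (a : ℕ → ℕ) (ha : ∀ t, a t + 1 ≤ d) (hi : ℕ) :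
    ∀ n lo, hi ≤ lo + n → ∑ t ∈ Finset.Ico lo hi, a t * d ^ (hi - 1 - t) < d ^ (hi - lo) := by
  have hd : 1 ≤ d := le_trans (by omega) (ha 0)
  intro n
  induction n with
  | zero =>
    intro lo hlo
    rw [Finset.Ico_eq_empty (by omega), Finset.sum_empty]
    exact Nat.pow_pos hd |>.trans_le (le_of_eq rfl) |>.trans_le (le_refl _)
  | succ n ih =>
    intro lo hlo
    rcases Nat.lt_or_ge lo hi with hlt | hge
    · rw [Finset.sum_eq_sum_Ico_succ_bot hlt]
      have h1 := ih (lo + 1) (by omega)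
      have h2 : hi - (lo + 1) = hi - lo - 1 := by omega
      rw [h2] at h1
      have h3 : d ^ (hi - lo) = d * d ^ (hi - lo - 1) := by
        rw [← pow_succ']
        congr 1
        omega
      have h4 : hi - 1 - lo = hi - lo - 1 := by omega
      rw [h4]
      have h5 := ha lo
      nlinarith [Nat.pow_pos (n := hi - lo - 1) hd]
    · rw [Finset.Ico_eq_empty (by omega), Finset.sum_empty]
      exact Nat.pow_pos hd
    
lemma digit_lt {d n : ℕ} (a b : ℕ → ℕ) (t0 : ℕ) (ht0 : t0 < n)
    (ha : ∀ t, a t + 1 ≤ d)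
    (hpre : ∀ t, t < t0 → a t = b t) (hstep : a t0 < b t0) :
    ∑ t ∈ Finset.range n, a t * d ^ (n - 1 - t) < ∑ t ∈ Finset.range n, b t * d ^ (n - 1 - t) := by
  have hd : 1 ≤ d := le_trans (by omega) (ha 0)
  have hsplit : ∀ c : ℕ → ℕ, ∑ t ∈ Finset.range n, c t * d ^ (n - 1 - t)
      = ∑ t ∈ Finset.Ico 0 t0, c t * d ^ (n - 1 - t)
        + (c t0 * d ^ (n - 1 - t0) + ∑ t ∈ Finset.Ico (t0 + 1) n, c t * d ^ (n - 1 - t)) := by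
    intro c
    rw [Finset.range_eq_Ico, ← Finset.sum_Ico_consecutive _ (Nat.zero_le t0) ht0.le,
      Finset.sum_eq_sum_Ico_succ_bot ht0]
  rw [hsplit a, hsplit b]
  have hpref : ∑ t ∈ Finset.Ico 0 t0, a t * d ^ (n - 1 - t)
      = ∑ t ∈ Finset.Ico 0 t0, b t * d ^ (n - 1 - t) := by
    apply Finset.sum_congr rfl
    intro t ht
    simp only [Finset.mem_Ico] at ht
    rw [hpre t ht.2]
  rw [hpref]
  apply Nat.add_lt_add_left
  have htail := tail_lt a ha n (n - t0) (t0 + 1) (by omega)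
  have hexp : n - (t0 + 1) = n - 1 - t0 := by omega
  rw [hexp] at htail
  have hb : b t0 * d ^ (n - 1 - t0) ≤ b t0 * d ^ (n - 1 - t0) + ∑ t ∈ Finset.Ico (t0 + 1) n, b t * d ^ (n - 1 - t) := Nat.le_add_right _ _
  have : a t0 * d ^ (n - 1 - t0) + d ^ (n - 1 - t0) ≤ b t0 * d ^ (n - 1 - t0) := by
    have : (a t0 + 1) * d ^ (n - 1 - t0) ≤ b t0 * d ^ (n - 1 - t0) :=
      Nat.mul_le_mul_right _ (by omega)
    nlinarith
  omega

/-- The digit sum defining the canonical realization. -/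
def Msum (q : ℕ) [NeZero q] (σ : Equiv.Perm (ZMod q)) (d : ℕ) (i : ZMod q) : ℕ :=
  ∑ t ∈ Finset.range q, mval q σ ((σ ^ t) i) * d ^ (q - 1 - t)

lemma Msum_key (hq : 2 ≤ q) (hσ : IsQCycle q σ) (d : ℕ) (i : ZMod q) :
    d * Msum q σ d i + mval q σ i = Msum q σ d (σ i) + mval q σ i * d ^ q := by
  unfold Msum
  have hmul : d * ∑ t ∈ Finset.range q, mval q σ ((σ ^ t) i) * d ^ (q - 1 - t)
      = ∑ t ∈ Finset.range q, mval q σ ((σ ^ t) i) * d ^ (q - t) := by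
    rw [Finset.mul_sum]
    apply Finset.sum_congr rfl
    intro t ht
    simp only [Finset.mem_range] at ht
    have : d ^ (q - t) = d * d ^ (q - 1 - t) := by
      rw [← pow_succ']
      congr 1
      omega
    rw [this]; ring
  rw [hmul]
  have hq1 : q = (q - 1) + 1 := by omega
  have hrange : Finset.range q = Finset.range ((q - 1) + 1) := by rw [← hq1]
  have hL : ∑ t ∈ Finset.range q, mval q σ ((σ ^ t) i) * d ^ (q - t)
      = (∑ t ∈ Finset.range (q - 1), mval q σ ((σ ^ (t + 1)) i) * d ^ (q - (t + 1)))
        + mval q σ i * d ^ q := by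
    conv_lhs => rw [hrange]
    rw [Finset.sum_range_succ']
    simp
  have hR : ∑ t ∈ Finset.range q, mval q σ ((σ ^ t) (σ i)) * d ^ (q - 1 - t)
      = (∑ t ∈ Finset.range (q - 1), mval q σ ((σ ^ (t + 1)) i) * d ^ (q - (t + 1)))
        + mval q σ i := by
    conv_lhs => rw [hrange]
    rw [Finset.sum_range_succ]
    have hterm : ∀ t, (σ ^ t) (σ i) = (σ ^ (t + 1)) i := by
      intro t
      rw [pow_succ, Equiv.Perm.mul_apply]
    have h1 : ∑ t ∈ Finset.range (q - 1), mval q σ ((σ ^ t) (σ i)) * d ^ (q - 1 - t)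
        = ∑ t ∈ Finset.range (q - 1), mval q σ ((σ ^ (t + 1)) i) * d ^ (q - (t + 1)) := by
      apply Finset.sum_congr rfl
      intro t ht
      simp only [Finset.mem_range] at ht
      rw [hterm]
      congr 2
      omega
    rw [h1, hterm]
    have hlast : (σ ^ ((q - 1) + 1)) i = i := by
      rw [← hq1, pow_q_eq_one hq hσ]; rfl
    rw [hlast]
    have : q - 1 - (q - 1) = 0 := by omega
    rw [this, pow_zero, mul_one]
  rw [hL, hR]
  ring

end MR
namespace MR
variable {q : ℕ} [NeZero q] {σ : Equiv.Perm (ZMod q)}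

lemma mval_all_eq (hq : 2 ≤ q) (hσ : IsQCycle q σ) {i j : ZMod q}
    (h : ∀ t < q, mval q σ ((σ ^ t) i) = mval q σ ((σ ^ t) j)) :
    ∀ t : ℕ, mval q σ ((σ ^ t) i) = mval q σ ((σ ^ t) j) := by
  intro t
  have hmod : ∀ k : ZMod q, (σ ^ t) k = (σ ^ (t % q)) k := by
    intro k
    conv_lhs => rw [← Nat.div_add_mod t q]
    rw [pow_add, pow_mul, pow_q_eq_one hq hσ, one_pow, one_mul]
  rw [hmod i, hmod j]
  exact h (t % q) (Nat.mod_lt _ q_pos)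

lemma rep_chain (hq : 2 ≤ q) (hσ : IsQCycle q σ) {i j : ZMod q}
    (hij : rep q i < rep q j)
    (h : ∀ t < q, mval q σ ((σ ^ t) i) = mval q σ ((σ ^ t) j)) : False := by
  have hall := mval_all_eq hq hσ h
  have hrep : ∀ t : ℕ, rep q ((σ ^ t) i) < rep q ((σ ^ t) j) := by
    intro t
    induction t with
    | zero => exact hij
    | succ t ih =>
      have hst := step_lemma ih (hall t)
      have hpow : ∀ k : ZMod q, (σ ^ (t + 1)) k = σ ((σ ^ t) k) := fun k => by
        rw [pow_succ', Equiv.Perm.mul_apply]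
      rw [hpow, hpow]
      exact hst
  -- i ≠ j
  have hne : i ≠ j := fun h' => by rw [h'] at hij; omega
  obtain ⟨s, hs⟩ := hσ i j
  have hs0 : s ≠ 0 := by
    intro h'; rw [h'] at hs; exact hne hs
  -- f k = rep ((σ ^ (k * s)) i) is strictly increasing
  have hstep : ∀ k : ℕ, rep q ((σ ^ (k * s)) i) < rep q ((σ ^ ((k + 1) * s)) i) := by
    intro k
    have := hrep (k * s)
    rw [← hs] at this
    have h2 : (σ ^ (k * s)) ((σ ^ s) i) = (σ ^ ((k + 1) * s)) i := by
      rw [← Equiv.Perm.mul_apply, ← pow_add]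
      congr 1
      ring
    rw [h2] at this
    exact this
  have hmono : ∀ k : ℕ, k + rep q ((σ ^ (0 * s)) i) ≤ rep q ((σ ^ (k * s)) i) := by
    intro k
    induction k with
    | zero => omega
    | succ k ih =>
      have := hstep k
      omega
  have h1 := hmono (q + 1)
  have h2 := rep_le ((σ ^ ((q + 1) * s)) i)
  have h3 := rep_pos ((σ ^ (0 * s)) i)
  omega

/-- Strict monotonicity of the digit sums. -/
lemma Msum_lt_Msum (hq : 2 ≤ q) (hσ : IsQCycle q σ) {d : ℕ}
    (hmd : ∀ k : ZMod q, mval q σ k + 1 ≤ d) {i j : ZMod q} (hij : rep q i < rep q j) :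
    Msum q σ d i < Msum q σ d j := by
  by_cases hex : ∃ t, t < q ∧ mval q σ ((σ ^ t) i) ≠ mval q σ ((σ ^ t) j)
  · classical
    obtain ⟨t1, ht1, hne1⟩ := hex
    -- minimal such t
    have hexn : ∃ t, t < q ∧ mval q σ ((σ ^ t) i) ≠ mval q σ ((σ ^ t) j) := ⟨t1, ht1, hne1⟩
    have ht0q : Nat.find hexn < q := (Nat.find_spec hexn).1
    have ht0ne : mval q σ ((σ ^ Nat.find hexn) i) ≠ mval q σ ((σ ^ Nat.find hexn) j) :=
      (Nat.find_spec hexn).2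
    set t0 := Nat.find hexn with ht0def
    have hmin : ∀ t < t0, mval q σ ((σ ^ t) i) = mval q σ ((σ ^ t) j) := by
      intro t ht
      by_contra hc
      have hmm := Nat.find_min hexn (ht0def ▸ ht)
      push_neg at hmm
      exact hc (hmm (by omega))
    -- reps increase up to t0
    have hrep : ∀ t ≤ t0, rep q ((σ ^ t) i) < rep q ((σ ^ t) j) := by
      intro t
      induction t with
      | zero => intro _; exact hij
      | succ t ih =>
        intro ht
        have h1 := ih (by omega)
        have h2 := step_lemma h1 (hmin t (by omega))
        have hpow : ∀ k : ZMod q, (σ ^ (t + 1)) k = σ ((σ ^ t) k) := fun k => by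
          rw [pow_succ', Equiv.Perm.mul_apply]
        rw [hpow, hpow]
        exact h2
    have hlt : mval q σ ((σ ^ t0) i) < mval q σ ((σ ^ t0) j) := by
      have hle := mval_mono (σ := σ) (hrep t0 le_rfl).le
      omega
    exact digit_lt (fun t => mval q σ ((σ ^ t) i)) (fun t => mval q σ ((σ ^ t) j)) t0 ht0q
      (fun t => hmd _) hmin hlt
  · push_neg at hex
    exact (rep_chain hq hσ hij fun t ht => hex t ht).elim

lemma Msum_pos (hq : 2 ≤ q) (hσ : IsQCycle q σ) {d : ℕ} (hd : 1 ≤ d)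
    (hm0 : 1 ≤ mval q σ 0) (i : ZMod q) : 1 ≤ Msum q σ d i := by
  obtain ⟨t, htq, ht⟩ := exists_pow_lt hq hσ i 0
  have hterm : 1 ≤ mval q σ ((σ ^ t) i) * d ^ (q - 1 - t) := by
    rw [ht]
    exact Nat.mul_pos hm0 (Nat.pow_pos hd)
  calc 1 ≤ mval q σ ((σ ^ t) i) * d ^ (q - 1 - t) := hterm
    _ ≤ Msum q σ d i := Finset.single_le_sum (f := fun t => mval q σ ((σ ^ t) i) * d ^ (q - 1 - t))
        (fun _ _ => Nat.zero_le _) (Finset.mem_range.2 htq)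

lemma Msum_ub (hq : 2 ≤ q) (hσ : IsQCycle q σ) {d : ℕ} (hd : 2 ≤ d)
    (hmd : ∀ k : ZMod q, mval q σ k + 1 ≤ d) (i : ZMod q) :
    Msum q σ d i + 2 ≤ d ^ q := by
  obtain ⟨t0, ht0q, ht0⟩ := exists_pow_lt hq hσ i (1 : ZMod q)
  have hm1 : mval q σ ((σ ^ t0) i) = 0 := by rw [ht0]; exact mval_one hq
  have hle : ∀ t ∈ Finset.range q,
      mval q σ ((σ ^ t) i) * d ^ (q - 1 - t) ≤ (if t = t0 then 0 else (d - 1) * d ^ (q - 1 - t)) := by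
    intro t ht
    by_cases h : t = t0
    · rw [if_pos h, h, hm1]; simp
    · rw [if_neg h]
      exact Nat.mul_le_mul_right _ (by have := hmd ((σ ^ t) i); omega)
  have h1 : Msum q σ d i ≤ ∑ t ∈ Finset.range q, (if t = t0 then 0 else (d - 1) * d ^ (q - 1 - t)) :=
    Finset.sum_le_sum hle
  have h2 : ∑ t ∈ Finset.range q, (if t = t0 then 0 else (d - 1) * d ^ (q - 1 - t)) + (d - 1) * d ^ (q - 1 - t0)
      = ∑ t ∈ Finset.range q, (d - 1) * d ^ (q - 1 - t) := by
    have hmem : t0 ∈ Finset.range q := Finset.mem_range.2 ht0q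
    rw [← Finset.sum_erase_add _ _ hmem,
      ← Finset.sum_erase_add _ (fun t => (d - 1) * d ^ (q - 1 - t)) hmem]
    have : ∑ t ∈ (Finset.range q).erase t0, (if t = t0 then 0 else (d - 1) * d ^ (q - 1 - t))
        = ∑ t ∈ (Finset.range q).erase t0, (d - 1) * d ^ (q - 1 - t) := by
      apply Finset.sum_congr rfl
      intro t ht
      rw [if_neg (Finset.ne_of_mem_erase ht)]
    rw [this]
    simp
  have h3 : ∑ t ∈ Finset.range q, (d - 1) * d ^ (q - 1 - t) + 1 = d ^ q :=
    geo_sum_rev (by omega) q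
  have h4 : 1 ≤ (d - 1) * d ^ (q - 1 - t0) := by
    have : 1 ≤ d ^ (q - 1 - t0) := Nat.pow_pos (by omega)
    have : (d - 1) * 1 ≤ (d - 1) * d ^ (q - 1 - t0) := Nat.mul_le_mul_left _ this
    omega
  omega

end MR
namespace MR
variable {q : ℕ} [NeZero q] {σ : Equiv.Perm (ZMod q)}

lemma sub_val (w w' : ZMod q) : (w' - w).val = (rep q w' + q - rep q w) % q := by
  conv_lhs => rw [← cast_rep w, ← cast_rep w']
  have h1 : ((rep q w' : ℕ) : ZMod q) - ((rep q w : ℕ) : ZMod q)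
      = ((rep q w' + q - rep q w : ℕ) : ZMod q) := by
    have hle : rep q w ≤ rep q w' + q := by have := rep_le w; omega
    rw [Nat.cast_sub hle, Nat.cast_add, ZMod.natCast_self]
    ring
  rw [h1, ZMod.val_natCast]

lemma desc_iff_entry (hq : 2 ≤ q) : Desc q σ 0 ↔ transMatrix q σ 0 0 = 1 := by
  have hkey : Desc q σ 0 ↔ ((0 : ZMod q) - σ 0).val < (σ (0 + 1) - σ 0).val := by
    unfold Desc
    rw [sub_val (σ 0) 0, sub_val (σ 0) (σ (0 + 1))]
    have hne : σ (0 + 1) ≠ σ 0 := by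
      intro h
      have h2 := σ.injective h
      have h3 := congrArg (rep q) h2
      rw [show ((0 : ZMod q) + 1) = 1 by ring] at h3
      rw [rep_one hq, rep_zero] at h3
      omega
    have hne' : rep q (σ (0 + 1)) ≠ rep q (σ 0) := fun h => hne (rep_inj h)
    have h0 : rep q (0 : ZMod q) = q := rep_zero
    rw [h0]
    have ha := rep_pos (σ 0); have hb := rep_le (σ 0)
    have hc := rep_pos (σ (0 + 1)); have hd := rep_le (σ (0 + 1))
    have hX : (q + q - rep q (σ 0)) % q = q - rep q (σ 0) := by
      have h1 : q + q - rep q (σ 0) = q + (q - rep q (σ 0)) := by omega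
      rw [h1, Nat.add_mod_left, Nat.mod_eq_of_lt (by omega)]
    rcases Nat.lt_or_ge (rep q (σ (0 + 1))) (rep q (σ 0)) with hlt | hge
    · have hY : (rep q (σ (0 + 1)) + q - rep q (σ 0)) % q
          = rep q (σ (0 + 1)) + q - rep q (σ 0) := Nat.mod_eq_of_lt (by omega)
      rw [hX, hY]
      omega
    · have hgt : rep q (σ 0) < rep q (σ (0 + 1)) := by omega
      have hY : (rep q (σ (0 + 1)) + q - rep q (σ 0)) % q
          = rep q (σ (0 + 1)) - rep q (σ 0) := by
        have h1 : rep q (σ (0 + 1)) + q - rep q (σ 0)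
            = q + (rep q (σ (0 + 1)) - rep q (σ 0)) := by omega
        rw [h1, Nat.add_mod_left, Nat.mod_eq_of_lt (by omega)]
      rw [hX, hY]
      omega
  rw [hkey]
  unfold transMatrix
  simp only [Matrix.of_apply]
  by_cases hc : ((0 : ZMod q) - σ 0).val < (σ (0 + 1) - σ 0).val
  · simp [hc]
  · simp [hc]

end MR
namespace MR
variable {q : ℕ} [NeZero q] {σ : Equiv.Perm (ZMod q)}

/-- the canonical realization -/
def xc (q : ℕ) [NeZero q] (σ : Equiv.Perm (ZMod q)) (d : ℕ) (i : ZMod q) : ℝ :=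
  (Msum q σ d i : ℝ) / ((d : ℝ) ^ q - 1)

lemma den_pos {d : ℕ} (hq : 2 ≤ q) (hd2 : 2 ≤ d) : (0 : ℝ) < (d : ℝ) ^ q - 1 := by
  have h1 : (1 : ℝ) < (d : ℝ) := by exact_mod_cast hd2
  have := one_lt_pow₀ h1 (by omega : q ≠ 0)
  linarith

lemma realization_xc (hq : 2 ≤ q) (hσ : IsQCycle q σ) {d : ℕ} (hd2 : 2 ≤ d)
    (hdes : desNum q σ = d) (h0 : Desc q σ 0) :
    MkRealization q d σ (xc q σ d) := by
  have hmd : ∀ k : ZMod q, mval q σ k + 1 ≤ d := fun k => hdes ▸ mval_le hq h0 k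
  have hm0 : 1 ≤ mval q σ 0 := by
    have := mval_zero (σ := σ) hq h0
    omega
  have hden := den_pos (q := q) hq hd2
  refine ⟨?_, ?_, ?_⟩
  · intro i
    unfold xc
    constructor
    · apply div_pos _ hden
      have := Msum_pos hq hσ (by omega : 1 ≤ d) hm0 i
      exact_mod_cast Nat.lt_of_lt_of_le Nat.zero_lt_one this
    · rw [div_lt_one hden]
      have := Msum_ub hq hσ hd2 hmd i
      have h2 : (Msum q σ d i : ℝ) + 2 ≤ (d : ℝ) ^ q := by exact_mod_cast this
      linarith
  · intro i j hij
    have hlt := Msum_lt_Msum hq hσ hmd hij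
    have hR : (Msum q σ d i : ℝ) < (Msum q σ d j : ℝ) := by exact_mod_cast hlt
    unfold xc
    gcongr
  · intro i
    refine ⟨(mval q σ i : ℤ), ?_⟩
    have hkey := Msum_key hq hσ d i
    have hkeyR : (d : ℝ) * (Msum q σ d i : ℝ) + (mval q σ i : ℝ)
        = (Msum q σ d (σ i) : ℝ) + (mval q σ i : ℝ) * (d : ℝ) ^ q := by
      exact_mod_cast hkey
    show (d : ℝ) * xc q σ d i = xc q σ d (σ i) + ((mval q σ i : ℤ) : ℝ)
    unfold xc
    push_cast
    field_simp
    linear_combination hkeyR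

end MR
namespace MR
variable {q : ℕ} [NeZero q] {σ : Equiv.Perm (ZMod q)}

lemma mval_split {r s : ℕ} (h1 : 1 ≤ r) (h2 : r ≤ s) (h3 : s ≤ q) :
    mval q σ ((s : ℕ) : ZMod q) = mval q σ ((r : ℕ) : ZMod q)
      + ((Finset.Ico r s).filter fun t : ℕ => Desc q σ (t : ZMod q)).card := by
  unfold mval
  rw [rep_cast (le_trans h1 h2) h3, rep_cast h1 (le_trans h2 h3)]
  rw [← Finset.Ico_union_Ico_eq_Ico h1 h2, Finset.filter_union,
    Finset.card_union_of_disjoint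
      (Finset.disjoint_filter_filter (Finset.Ico_disjoint_Ico_consecutive 1 r s))]

lemma unique_real (hq : 2 ≤ q) (hσ : IsQCycle q σ) {d : ℕ} (hd2 : 2 ≤ d)
    (hdes : desNum q σ = d) {x : ZMod q → ℝ} (hx : MkRealization q d σ x) :
    Desc q σ 0 ∧ x = xc q σ d := by
  obtain ⟨hIoo, hmono, hfun⟩ := hx
  choose mi hmi using hfun
  have hmi' : ∀ i, (d : ℝ) * x i = x (σ i) + (mi i : ℝ) := fun i => hmi i
  have hdR : (2 : ℝ) ≤ (d : ℝ) := by exact_mod_cast hd2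
  have hbound : ∀ i, 0 ≤ mi i ∧ mi i ≤ (d : ℤ) - 1 := by
    intro i
    have h1 := hIoo i
    have h2 := hIoo (σ i)
    have he := hmi' i
    obtain ⟨h1a, h1b⟩ := h1
    obtain ⟨h2a, h2b⟩ := h2
    have hx1 : (mi i : ℝ) < d := by nlinarith
    have hx0 : (-1 : ℝ) < (mi i : ℝ) := by nlinarith
    have hx1' : mi i < (d : ℤ) := by exact_mod_cast hx1
    have hx0' : (-1 : ℤ) < mi i := by exact_mod_cast hx0
    omega
  -- consecutive step
  have hstep2 : ∀ r : ℕ, 1 ≤ r → r < q →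
      mi ((r : ℕ) : ZMod q) + (if Desc q σ ((r : ℕ) : ZMod q) then 1 else 0)
        ≤ mi ((r + 1 : ℕ) : ZMod q) := by
    intro r h1 h2
    have hxlt : x ((r : ℕ) : ZMod q) < x ((r + 1 : ℕ) : ZMod q) :=
      hmono _ _ (by rw [rep_cast h1 h2.le, rep_cast (by omega) h2]; omega)
    have e1 := hmi' ((r : ℕ) : ZMod q)
    have e2 := hmi' ((r + 1 : ℕ) : ZMod q)
    have hcast : (((r : ℕ) : ZMod q) + 1) = ((r + 1 : ℕ) : ZMod q) := by push_cast; ring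
    obtain ⟨hs1a, hs1b⟩ := hIoo (σ ((r : ℕ) : ZMod q))
    obtain ⟨hs2a, hs2b⟩ := hIoo (σ ((r + 1 : ℕ) : ZMod q))
    have hdx : (d : ℝ) * x ((r : ℕ) : ZMod q) < (d : ℝ) * x ((r + 1 : ℕ) : ZMod q) := by
      apply mul_lt_mul_of_pos_left hxlt
      linarith
    by_cases hD : Desc q σ ((r : ℕ) : ZMod q)
    · rw [if_pos hD]
      unfold Desc at hD
      rw [hcast] at hD
      have hxd : x (σ ((r + 1 : ℕ) : ZMod q)) < x (σ ((r : ℕ) : ZMod q)) := hmono _ _ hD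
      have hR : (mi ((r : ℕ) : ZMod q) : ℝ) < (mi ((r + 1 : ℕ) : ZMod q) : ℝ) := by linarith
      have : mi ((r : ℕ) : ZMod q) < mi ((r + 1 : ℕ) : ZMod q) := by exact_mod_cast hR
      omega
    · rw [if_neg hD, add_zero]
      have hR : (mi ((r : ℕ) : ZMod q) : ℝ) < (mi ((r + 1 : ℕ) : ZMod q) : ℝ) + 1 := by linarith
      have : mi ((r : ℕ) : ZMod q) < mi ((r + 1 : ℕ) : ZMod q) + 1 := by exact_mod_cast hR
      omega
  -- telescoping
  have htel : ∀ u r : ℕ, 1 ≤ r → r + u ≤ q →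
      mi ((r : ℕ) : ZMod q)
        + (((Finset.Ico r (r + u)).filter fun t : ℕ => Desc q σ (t : ZMod q)).card : ℤ)
        ≤ mi ((r + u : ℕ) : ZMod q) := by
    intro u
    induction u with
    | zero => intro r h1 h2; simp
    | succ u ih =>
      intro r h1 h2
      have hA := ih r h1 (by omega)
      have hB := hstep2 (r + u) (by omega) (by omega)
      have hC : ((Finset.Ico r (r + u + 1)).filter fun t : ℕ => Desc q σ (t : ZMod q)).card
          = ((Finset.Ico r (r + u)).filter fun t : ℕ => Desc q σ (t : ZMod q)).card
            + (if Desc q σ ((r + u : ℕ) : ZMod q) then 1 else 0) := by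
        rw [Finset.Ico_add_one_right_eq_Icc, ← Finset.Ico_insert_right (by omega : r ≤ r + u),
          Finset.filter_insert]
        have hnm : r + u ∉ Finset.Ico r (r + u) := by simp
        by_cases hD : Desc q σ ((r + u : ℕ) : ZMod q)
        · rw [if_pos hD, if_pos hD,
            Finset.card_insert_of_notMem (fun hm => hnm (Finset.mem_of_mem_filter _ hm))]
        · rw [if_neg hD, if_neg hD, add_zero]
      have hE : r + (u + 1) = r + u + 1 := by omega
      rw [hE]
      by_cases hD : Desc q σ ((r + u : ℕ) : ZMod q)
      · rw [if_pos hD] at hB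
        rw [hC, if_pos hD]
        omega
      · rw [if_neg hD, add_zero] at hB
        rw [hC, if_neg hD, add_zero]
        omega
  have hIco := card_Ico_desc (σ := σ) (by omega : 1 ≤ q)
  -- telescoping from 1 to q
  have htel1 := htel (q - 1) 1 le_rfl (by omega)
  have hqe : 1 + (q - 1) = q := by omega
  rw [hqe] at htel1
  rw [ZMod.natCast_self] at htel1
  have hb1 := hbound ((1 : ℕ) : ZMod q)
  have hb0 := hbound (0 : ZMod q)
  have hD0 : Desc q σ 0 := by
    by_contra hD
    rw [if_neg hD, add_zero] at hIco
    omega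
  refine ⟨hD0, ?_⟩
  rw [if_pos hD0] at hIco
  -- mi ↑1 = 0
  have hmi1 : mi ((1 : ℕ) : ZMod q) = 0 := by omega
  -- mi = mval everywhere
  have hmieq : ∀ i, mi i = (mval q σ i : ℤ) := by
    intro i
    have h1 : 1 ≤ rep q i := rep_pos i
    have h2 : rep q i ≤ q := rep_le i
    have hlow := htel (rep q i - 1) 1 le_rfl (by omega)
    have he1 : 1 + (rep q i - 1) = rep q i := by omega
    rw [he1] at hlow
    have hhigh := htel (q - rep q i) (rep q i) h1 (by omega)
    have he2 : rep q i + (q - rep q i) = q := by omega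
    rw [he2] at hhigh
    rw [ZMod.natCast_self] at hhigh
    have hsplit := mval_split (σ := σ) h1 h2 le_rfl
    -- identify mval at casts
    have hmv1 : mval q σ ((rep q i : ℕ) : ZMod q) = mval q σ i := by rw [cast_rep]
    have hmvq : mval q σ ((q : ℕ) : ZMod q) = mval q σ (0 : ZMod q) := by
      rw [ZMod.natCast_self]
    have hmvlow : mval q σ ((rep q i : ℕ) : ZMod q)
        = ((Finset.Ico 1 (rep q i)).filter fun t : ℕ => Desc q σ (t : ZMod q)).card := by
      unfold mval
      rw [rep_cast h1 h2]
    have hmvzero : mval q σ (0 : ZMod q)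
        = ((Finset.Ico 1 q).filter fun t : ℕ => Desc q σ (t : ZMod q)).card := by
      unfold mval
      rw [rep_zero]
    have hmidx : mi ((rep q i : ℕ) : ZMod q) = mi i := by rw [cast_rep]
    rw [hmidx] at hlow hhigh
    rw [hmvq, hmvlow, hmvzero] at hsplit
    have hmveq : mval q σ i
        = ((Finset.Ico 1 (rep q i)).filter fun t : ℕ => Desc q σ (t : ZMod q)).card := by
      rw [← hmv1, hmvlow]
    omega
  -- now derive x = xc
  have hden := den_pos (q := q) hq hd2
  funext i
  have hiter : ∀ n : ℕ, (d : ℝ) ^ n * x i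
      = x ((σ ^ n) i) + ∑ t ∈ Finset.range n, (mval q σ ((σ ^ t) i) : ℝ) * (d : ℝ) ^ (n - 1 - t) := by
    intro n
    induction n with
    | zero => simp
    | succ n ih =>
      have e := hmi' ((σ ^ n) i)
      rw [hmieq ((σ ^ n) i), Int.cast_natCast] at e
      have hpow : (σ ^ (n + 1)) i = σ ((σ ^ n) i) := by
        rw [pow_succ', Equiv.Perm.mul_apply]
      have hsum1 : (d : ℝ) * ∑ t ∈ Finset.range n, (mval q σ ((σ ^ t) i) : ℝ) * (d : ℝ) ^ (n - 1 - t)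
          = ∑ t ∈ Finset.range n, (mval q σ ((σ ^ t) i) : ℝ) * (d : ℝ) ^ (n - t) := by
        rw [Finset.mul_sum]
        apply Finset.sum_congr rfl
        intro t ht
        simp only [Finset.mem_range] at ht
        have : (d : ℝ) ^ (n - t) = (d : ℝ) * (d : ℝ) ^ (n - 1 - t) := by
          rw [← pow_succ']
          congr 1
          omega
        rw [this]; ring
      have hsum2 : ∑ t ∈ Finset.range (n + 1), (mval q σ ((σ ^ t) i) : ℝ) * (d : ℝ) ^ (n + 1 - 1 - t)
          = (∑ t ∈ Finset.range n, (mval q σ ((σ ^ t) i) : ℝ) * (d : ℝ) ^ (n - t))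
            + (mval q σ ((σ ^ n) i) : ℝ) := by
        have h1 : ∀ t : ℕ, n + 1 - 1 - t = n - t := fun t => by omega
        simp only [h1]
        rw [Finset.sum_range_succ, Nat.sub_self, pow_zero, mul_one]
      rw [hsum2, hpow]
      have : (d : ℝ) ^ (n + 1) * x i = (d : ℝ) * ((d : ℝ) ^ n * x i) := by ring
      rw [this, ih, mul_add, hsum1, e]
      ring
  have hfin := hiter q
  rw [pow_q_eq_one hq hσ] at hfin
  have hM : (∑ t ∈ Finset.range q, (mval q σ ((σ ^ t) i) : ℝ) * (d : ℝ) ^ (q - 1 - t))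
      = (Msum q σ d i : ℝ) := by
    unfold Msum
    push_cast
    rfl
  rw [hM] at hfin
  have hone : ((1 : Equiv.Perm (ZMod q)) : Equiv.Perm (ZMod q)) i = i := rfl
  rw [hone] at hfin
  show x i = xc q σ d i
  unfold xc
  rw [eq_div_iff (ne_of_gt hden)]
  linarith

end MR
/-- A `q`-cycle `σ` with `des σ = d ≥ 2` and signature `(a₁, …, a_q)` has a
realization under `m_d` iff `a_q = 1` (here `a_q` is the diagonal entry of the
transition matrix at the index `q ≡ 0`); in that case the realization is
unique. -/
theorem minimal_realization_iff (q d : ℕ) [NeZero q] (hq : 2 ≤ q)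
    (σ : Equiv.Perm (ZMod q)) (hσ : IsQCycle q σ) (hd : desNum q σ = d)
    (hd2 : 2 ≤ d) :
    ((∃ x : ZMod q → ℝ, MkRealization q d σ x) ↔ transMatrix q σ 0 0 = 1) ∧
    (transMatrix q σ 0 0 = 1 → ∃! x : ZMod q → ℝ, MkRealization q d σ x) := by
  constructor
  · constructor
    · rintro ⟨x, hx⟩
      exact (MR.desc_iff_entry hq).1 (MR.unique_real hq hσ hd2 hd hx).1
    · intro ha
      exact ⟨MR.xc q σ d, MR.realization_xc hq hσ hd2 hd ((MR.desc_iff_entry hq).2 ha)⟩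
  · intro ha
    have hD0 := (MR.desc_iff_entry hq).2 ha
    exact ⟨MR.xc q σ d, MR.realization_xc hq hσ hd2 hd hD0,
      fun x hx => (MR.unique_real hq hσ hd2 hd hx).2⟩
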